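/- Let G be a bipartite graph (parts V1, V2), with each vertex on at least one edge, and let P_G ⊂ R^{n+1} be the edge polytope, i.e., the convex hull of the vectors a_{ij} = e_i + e_j over all edges ij of G. For nonempty subsets I ⊆ V1 and J ⊆ V2 such that the induced subgraph G_{I∪J} has at least one edge, the convex hull Q_{I,J} of {a_{ij} : ij ∈ E(G_{I∪J})} is a face of P_G; explicitly, it is the face of P_G maximizing the linear functional φ_{I,J} = Σ_{i∈I} φ_i + Σ_{j∈J} φ_j, where φ_m is the m-th coordinate projection. -/
import Mathlib


/-- Let `G` be a bipartite graph on `{0,…,n}` with parts `V1 = {m : m ≤ k}` and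
`V2 = {m : k < m}`, every vertex lying on at least one edge, and let
`P_G ⊆ ℝ^{n+1}` be its edge polytope, the convex hull of the vectors
`a_{ij} = e_i + e_j` over edges `ij`. For nonempty `I ⊆ V1`, `J ⊆ V2` such that the
induced subgraph `G_{I∪J}` has at least one edge, the convex hull `Q_{I,J}` of
`{a_{ij} : ij ∈ E(G_{I∪J})}` is the face of `P_G` maximizing the linear functional
`φ_{I,J}(x) = Σ_{m ∈ I∪J} x_m`. -/
theorem edgePolytope_face_of_induced_subgraph
    (n k : ℕ)
    (E : Fin (n + 1) → Fin (n + 1) → Prop)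
    (hbip : ∀ i j, E i j → i.1 ≤ k ∧ k < j.1)
    (hcov : ∀ v : Fin (n + 1), ∃ i j, E i j ∧ (v = i ∨ v = j))
    (I J : Finset (Fin (n + 1)))
    (hI : ∀ i ∈ I, i.1 ≤ k) (hJ : ∀ j ∈ J, k < j.1)
    (hIne : I.Nonempty) (hJne : J.Nonempty)
    (hedge : ∃ i ∈ I, ∃ j ∈ J, E i j) :
    convexHull ℝ {w : Fin (n + 1) → ℝ |
        ∃ i j, E i j ∧ i ∈ I ∧ j ∈ J ∧ w = Pi.single i 1 + Pi.single j 1} =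
      {x ∈ convexHull ℝ {w : Fin (n + 1) → ℝ |
            ∃ i j, E i j ∧ w = Pi.single i 1 + Pi.single j 1} |
        ∀ y ∈ convexHull ℝ {w : Fin (n + 1) → ℝ |
            ∃ i j, E i j ∧ w = Pi.single i 1 + Pi.single j 1},
          ∑ m ∈ I ∪ J, y m ≤ ∑ m ∈ I ∪ J, x m} := by
  classical
  set φ : (Fin (n + 1) → ℝ) → ℝ := fun x => ∑ m ∈ I ∪ J, x m with hφ
  have hlin : IsLinearMap ℝ φ := by
    constructor
    · intro x y; simp [hφ, Finset.sum_add_distrib]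
    · intro c x; simp [hφ, Finset.mul_sum]
  have key : ∀ i j : Fin (n + 1), E i j →
      φ (Pi.single i 1 + Pi.single j 1) =
        (if i ∈ I then (1 : ℝ) else 0) + (if j ∈ J then (1 : ℝ) else 0) := by
    intro i j hij
    obtain ⟨hik, hkj⟩ := hbip i j hij
    have hiJ : i ∉ J := fun h => absurd (hJ i h) (not_lt.2 hik)
    have hjI : j ∉ I := fun h => absurd hkj (not_lt.2 (hI j h))
    simp only [hφ, Pi.add_apply, Finset.sum_add_distrib]
    congr 1 <;>
      simp [Pi.single_apply, Finset.sum_ite_eq', Finset.mem_union, hiJ, hjI]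
  have hle2 : ∀ w ∈ {w : Fin (n + 1) → ℝ |
      ∃ i j, E i j ∧ w = Pi.single i 1 + Pi.single j 1}, φ w ≤ 2 := by
    rintro w ⟨i, j, hij, rfl⟩
    rw [key i j hij]
    have h1 : (if i ∈ I then (1 : ℝ) else 0) ≤ 1 := by split <;> norm_num
    have h2 : (if j ∈ J then (1 : ℝ) else 0) ≤ 1 := by split <;> norm_num
    linarith
  have hPle2 : ∀ x ∈ convexHull ℝ {w : Fin (n + 1) → ℝ |
      ∃ i j, E i j ∧ w = Pi.single i 1 + Pi.single j 1}, φ x ≤ 2 :=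
    fun x hx => convexHull_min hle2 (convex_halfSpace_le hlin 2) hx
  obtain ⟨i0, hi0, j0, hj0, hij0⟩ := hedge
  have hv0 : (Pi.single i0 1 + Pi.single j0 1 : Fin (n + 1) → ℝ) ∈
      convexHull ℝ {w : Fin (n + 1) → ℝ |
        ∃ i j, E i j ∧ w = Pi.single i 1 + Pi.single j 1} :=
    subset_convexHull ℝ _ ⟨i0, j0, hij0, rfl⟩
  have hv0val : φ (Pi.single i0 1 + Pi.single j0 1) = 2 := by
    rw [key i0 j0 hij0, if_pos hi0, if_pos hj0]; norm_num
  ext x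
  constructor
  · intro hx
    have hxP : x ∈ convexHull ℝ {w : Fin (n + 1) → ℝ |
        ∃ i j, E i j ∧ w = Pi.single i 1 + Pi.single j 1} := by
      refine convexHull_mono ?_ hx
      rintro w ⟨i, j, hij, _, _, rfl⟩
      exact ⟨i, j, hij, rfl⟩
    have hx2 : φ x = 2 := by
      refine convexHull_min ?_ (convex_hyperplane hlin 2) hx
      rintro w ⟨i, j, hij, hiI, hjJ, rfl⟩
      show φ _ = 2
      rw [key i j hij, if_pos hiI, if_pos hjJ]; norm_num
    refine ⟨hxP, fun y hy => ?_⟩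
    have h1 := hPle2 y hy
    simp only [hφ] at h1 hx2
    linarith
  · rintro ⟨hxP, hmax⟩
    have hx2 : φ x = 2 := by
      refine le_antisymm (hPle2 x hxP) ?_
      have h1 := hmax _ hv0
      simp only [hφ] at hv0val ⊢
      linarith
    rw [convexHull_eq] at hxP
    obtain ⟨ι, t, w, z, hw0, hw1, hz, hcm⟩ := hxP
    have hxeq : x = ∑ i ∈ t, w i • z i := by
      rw [← hcm, Finset.centerMass_eq_of_sum_1 _ _ hw1]
    have hφx : φ x = ∑ i ∈ t, w i * φ (z i) := by
      simp only [hφ, hxeq, Finset.sum_apply, Pi.smul_apply, smul_eq_mul]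
      rw [Finset.sum_comm]
      exact Finset.sum_congr rfl fun i _ => (Finset.mul_sum _ _ _).symm
    have hzero : ∀ i ∈ t, w i * (2 - φ (z i)) = 0 := by
      have hsum : ∑ i ∈ t, w i * (2 - φ (z i)) = 0 := by
        have h : ∑ i ∈ t, w i * (2 - φ (z i)) =
            2 * ∑ i ∈ t, w i - ∑ i ∈ t, w i * φ (z i) := by
          rw [Finset.mul_sum, ← Finset.sum_sub_distrib]
          exact Finset.sum_congr rfl fun i _ => by ring
        rw [h, hw1, ← hφx, hx2]; ring
      exact (Finset.sum_eq_zero_iff_of_nonneg (fun i hi => by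
        have h1 := hw0 i hi
        have h2 := hle2 _ (hz i hi)
        nlinarith)).1 hsum
    have hzQ : ∀ i ∈ t, w i ≠ 0 → z i ∈ {w : Fin (n + 1) → ℝ |
        ∃ i j, E i j ∧ i ∈ I ∧ j ∈ J ∧ w = Pi.single i 1 + Pi.single j 1} := by
      intro i hi hwi
      have hφz : φ (z i) = 2 := by
        rcases mul_eq_zero.1 (hzero i hi) with h | h
        · exact absurd h hwi
        · linarith
      obtain ⟨a, b, hab, hzab⟩ := hz i hi
      have hφz' := hφz
      rw [hzab, key a b hab] at hφz'
      have ha1 : (if a ∈ I then (1 : ℝ) else 0) ≤ 1 := by split <;> norm_num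
      have hb1 : (if b ∈ J then (1 : ℝ) else 0) ≤ 1 := by split <;> norm_num
      have haI : a ∈ I := by
        by_contra hmem
        rw [if_neg hmem] at hφz'; linarith
      have hbJ : b ∈ J := by
        by_contra hmem
        rw [if_neg hmem] at hφz'; linarith
      exact ⟨a, b, hab, haI, hbJ, hzab⟩
    rw [← hcm, ← Finset.centerMass_filter_ne_zero]
    refine Finset.centerMass_mem_convexHull _ ?_ ?_ ?_
    · intro i hi; exact hw0 i (Finset.mem_filter.1 hi).1
    · rw [Finset.sum_filter_ne_zero, hw1]; norm_num
    · intro i hi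
      obtain ⟨hit, hwi⟩ := Finset.mem_filter.1 hi
      exact hzQ i hit hwi
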